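/- Let ψ : G → G be a commutator-central endomorphism of a group G and let α ∈ 𝓔. Then for all g, h ∈ G, the element ψ_α(g·h) · (ψ_α(g) · ψ_α(h))⁻¹ lies in the center Z(G); that is, ψ_α is multiplicative modulo the center. -/

import Mathlib

/-- Evaluation of an element of the free group `𝓔 = FreeGroup (Monoid.End G)`
at an element `g : G`: the image of `α` under the homomorphism `𝓔 → G`
given by `FreeGroup.lift (fun φ => φ g)`. -/
def evalE {G : Type*} [Group G] (α : FreeGroup (Monoid.End G)) (g : G) : G :=
  FreeGroup.lift (fun φ : Monoid.End G => φ g) α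

lemma evalE_mul_mem_commutator {G : Type*} [Group G]
    (α : FreeGroup (Monoid.End G)) (g h : G) :
    evalE α (g * h) * (evalE α g * evalE α h)⁻¹ ∈ commutator G := by
  have key : (Abelianization.of (evalE α (g * h)) : Abelianization G)
      = Abelianization.of (evalE α g) * Abelianization.of (evalE α h) := by
    induction α using FreeGroup.induction_on with
    | C1 => simp [evalE]
    | of φ =>
        simp [evalE, map_mul]
    | inv_of φ ih =>
        simp only [evalE, map_inv] at *
        rw [ih, mul_inv]
    | mul x y ihx ihy =>
        simp only [evalE, map_mul] at *
        rw [ihx, ihy, mul_mul_mul_comm]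
  have h1 : (Abelianization.of (evalE α (g * h) * (evalE α g * evalE α h)⁻¹) : Abelianization G) = 1 := by
    simp only [map_mul, map_inv, key]
    group
  exact (QuotientGroup.eq_one_iff _).mp h1

open scoped commutatorElement

/-- `ψ_α` is multiplicative modulo the center. -/
theorem psiAlpha_mul_mod_center {G : Type*} [Group G]
    (ψ : Monoid.End G) (hψ : ∀ g h : G, ψ ⁅g, h⁆ ∈ Subgroup.center G)
    (α : FreeGroup (Monoid.End G)) (g h : G) :
    ψ (evalE α (g * h)) * (ψ (evalE α g) * ψ (evalE α h))⁻¹ ∈ Subgroup.center G := by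
  have h1 : evalE α (g * h) * (evalE α g * evalE α h)⁻¹ ∈ commutator G :=
    evalE_mul_mem_commutator α g h
  have h2 : commutator G ≤ (Subgroup.center G).comap ψ := by
    rw [commutator_def, Subgroup.commutator_le]
    intro x hx y hy
    exact hψ x y
  have := h2 h1
  have h3 : ψ (evalE α (g * h) * (evalE α g * evalE α h)⁻¹) ∈ Subgroup.center G := this
  simpa [map_mul, map_inv] using h3
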